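/- Let G be a simple signed graph whose set of positive edges is a matching, and let ab be a positive edge. Let G' be obtained from G by making ab negative. If G has an induced copy of C₄ containing a and b in which a and b are the only vertices adjacent to a positive edge, then fix(G) ≤ (3/2)·fix(G'); otherwise fix(G) ≤ fix(G'). -/

import Mathlib

/-- `S` is a fixed set of the conjunctive network with positive edges `pos`,
negative edges `neg`. -/
def IsFixedSet {V : Type*} (pos neg : V → V → Prop) (S : Set V) : Prop :=
  ∀ v, v ∈ S ↔ (∀ u, pos u v → u ∈ S) ∧ (∀ u, neg u v → u ∉ S)

/-- Number of fixed points of the conjunctive network. -/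
noncomputable def fixc {V : Type*} (pos neg : V → V → Prop) : ℕ :=
  Set.ncard {S : Set V | IsFixedSet pos neg S}

/-- `{a,b,u,v}` induces a 4-cycle `a-b-u-v-a` in the graph with adjacency `adj`. -/
def IsInducedC4 {V : Type*} (adj : V → V → Prop) (a b u v : V) : Prop :=
  a ≠ b ∧ a ≠ u ∧ a ≠ v ∧ b ≠ u ∧ b ≠ v ∧ u ≠ v ∧
  adj a b ∧ adj b u ∧ adj u v ∧ adj v a ∧ ¬ adj a u ∧ ¬ adj b v

section Aux

variable {V : Type*} (pos neg : V → V → Prop) (a b : V)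
variable (p' n' : V → V → Prop)

lemma fs_mem {S : Set V} (hF : IsFixedSet pos neg S) {v : V} (hv : v ∈ S) :
    (∀ u, pos u v → u ∈ S) ∧ (∀ u, neg u v → u ∉ S) := (hF v).mp hv

-- Lemma (i): both out, a has no negative neighbour in S: add a.
lemma fix_addA
    (hps : Symmetric pos) (hns : Symmetric neg) (hpi : ∀ v, ¬ pos v v)
    (hni : ∀ v, ¬ neg v v)
    (hmatch : ∀ u v w, pos u v → pos u w → v = w) (hab : pos a b)
    (hp' : ∀ u v, p' u v ↔ (pos u v ∧ ¬ ((u = a ∧ v = b) ∨ (u = b ∧ v = a))))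
    (hn' : ∀ u v, n' u v ↔ (neg u v ∨ (u = a ∧ v = b) ∨ (u = b ∧ v = a)))
    {S : Set V} (hF : IsFixedSet pos neg S) (haS : a ∉ S) (hbS : b ∉ S)
    (hfree : ∀ x, neg x a → x ∉ S) :
    IsFixedSet p' n' (insert a S) := by
  have hne : a ≠ b := fun h => hpi a (h ▸ hab)
  intro v
  rcases eq_or_ne v a with hva | hva
  · rw [hva]
    refine iff_of_true (Set.mem_insert _ _) ⟨?_, ?_⟩
    · intro u hu
      exfalso
      obtain ⟨hpu, hpat⟩ := (hp' u a).mp hu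
      have : u = b := hmatch a u b (hps hpu) hab
      exact hpat (Or.inr ⟨this, rfl⟩)
    · intro u hu
      rcases (hn' u a).mp hu with h | ⟨h1, h2⟩ | ⟨h1, h2⟩
      · intro hc
        rcases Set.mem_insert_iff.mp hc with h2 | hc
        · rw [h2] at h; exact hni a h
        · exact hfree u h hc
      · exact absurd h2 hne
      · rw [h1]
        intro hc
        rcases Set.mem_insert_iff.mp hc with h | hc
        · exact hne h.symm
        · exact hbS hc
  rcases eq_or_ne v b with hvb | hvb
  · rw [hvb]
    refine iff_of_false ?_ ?_
    · intro hc
      rcases Set.mem_insert_iff.mp hc with h | hc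
      · exact hne h.symm
      · exact hbS hc
    · rintro ⟨c1, c2⟩
      exact c2 a ((hn' a b).mpr (Or.inr (Or.inl ⟨rfl, rfl⟩))) (Set.mem_insert _ _)
  -- generic vertex
  have hp'v : ∀ u, p' u v ↔ pos u v := by
    intro u
    rw [hp']
    constructor
    · exact fun h => h.1
    · intro h
      refine ⟨h, ?_⟩
      rintro (⟨h1, h2⟩ | ⟨h1, h2⟩)
      · exact hvb h2
      · exact hva h2
  have hn'v : ∀ u, n' u v ↔ neg u v := by
    intro u
    rw [hn']
    constructor
    · rintro (h | ⟨h1, h2⟩ | ⟨h1, h2⟩)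
      · exact h
      · exact absurd h2 hvb
      · exact absurd h2 hva
    · exact fun h => Or.inl h
  by_cases hvS : v ∈ S
  · refine iff_of_true (Set.mem_insert_of_mem _ hvS) ⟨?_, ?_⟩
    · intro u hu
      exact Set.mem_insert_of_mem _ ((fs_mem pos neg hF hvS).1 u ((hp'v u).mp hu))
    · intro u hu hc
      have hnu : neg u v := (hn'v u).mp hu
      rcases Set.mem_insert_iff.mp hc with rfl | hc
      · exact hfree v (hns hnu) hvS
      · exact (fs_mem pos neg hF hvS).2 u hnu hc
  · refine iff_of_false (fun hc => hvS (((Set.mem_insert_iff.mp hc).resolve_left hva))) ?_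
    rintro ⟨c1, c2⟩
    apply hvS
    apply (hF v).mpr
    constructor
    · intro u hu
      have := c1 u ((hp'v u).mpr hu)
      rcases Set.mem_insert_iff.mp this with rfl | h
      · exact absurd (hmatch u b v hab hu) (Ne.symm hvb)
      · exact h
    · intro u hu
      exact fun hc => c2 u ((hn'v u).mpr hu) (Set.mem_insert_of_mem _ hc)

-- Lemma (iii): both out, both dominated: S itself.
lemma fix_keep
    (hns : Symmetric neg)
    (hp' : ∀ u v, p' u v ↔ (pos u v ∧ ¬ ((u = a ∧ v = b) ∨ (u = b ∧ v = a))))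
    (hn' : ∀ u v, n' u v ↔ (neg u v ∨ (u = a ∧ v = b) ∨ (u = b ∧ v = a)))
    {S : Set V} (hF : IsFixedSet pos neg S) (haS : a ∉ S) (hbS : b ∉ S)
    (hxa : ∃ x ∈ S, neg x a) (hxb : ∃ x ∈ S, neg x b) :
    IsFixedSet p' n' S := by
  intro v
  rcases eq_or_ne v a with hva | hva
  · rw [hva]
    refine iff_of_false haS ?_
    rintro ⟨c1, c2⟩
    obtain ⟨x, hxS, hx⟩ := hxa
    exact c2 x ((hn' x a).mpr (Or.inl hx)) hxS
  rcases eq_or_ne v b with hvb | hvb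
  · rw [hvb]
    refine iff_of_false hbS ?_
    rintro ⟨c1, c2⟩
    obtain ⟨x, hxS, hx⟩ := hxb
    exact c2 x ((hn' x b).mpr (Or.inl hx)) hxS
  have hp'v : ∀ u, p' u v ↔ pos u v := by
    intro u
    rw [hp']
    exact ⟨fun h => h.1, fun h => ⟨h, by rintro (⟨h1, h2⟩ | ⟨h1, h2⟩); exacts [hvb h2, hva h2]⟩⟩
  have hn'v : ∀ u, n' u v ↔ neg u v := by
    intro u
    rw [hn']
    constructor
    · rintro (h | ⟨h1, h2⟩ | ⟨h1, h2⟩)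
      · exact h
      · exact absurd h2 hvb
      · exact absurd h2 hva
    · exact fun h => Or.inl h
  rw [hF v]
  constructor
  · rintro ⟨c1, c2⟩
    exact ⟨fun u hu => c1 u ((hp'v u).mp hu), fun u hu => c2 u ((hn'v u).mp hu)⟩
  · rintro ⟨c1, c2⟩
    exact ⟨fun u hu => c1 u ((hp'v u).mpr hu), fun u hu => c2 u ((hn'v u).mpr hu)⟩

-- Lemma (iv): a,b in S; move to the b-side after augmenting with a maximal
-- independent set M' of "a-only-dominated" vertices.
lemma fix_broute
    (hps : Symmetric pos) (hns : Symmetric neg) (hpi : ∀ v, ¬ pos v v)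
    (hni : ∀ v, ¬ neg v v)
    (hmatch : ∀ u v w, pos u v → pos u w → v = w) (hab : pos a b)
    (hp' : ∀ u v, p' u v ↔ (pos u v ∧ ¬ ((u = a ∧ v = b) ∨ (u = b ∧ v = a))))
    (hn' : ∀ u v, n' u v ↔ (neg u v ∨ (u = a ∧ v = b) ∨ (u = b ∧ v = a)))
    {S T M' : Set V} (hF : IsFixedSet pos neg S) (haS : a ∈ S) (hbS : b ∈ S)
    (hT : ∀ x, x ∈ T ↔ (x ∈ S ∧ x ≠ a ∧ x ≠ b))
    (hM1 : ∀ m ∈ M', m ∉ S) (hM2 : ∀ m ∈ M', ∀ x, ¬ pos x m)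
    (hM3 : ∀ m ∈ M', ∀ x ∈ T, ¬ neg x m) (hM4 : ∀ m ∈ M', ¬ neg m b)
    (hM5 : ∀ m ∈ M', ∀ k ∈ M', ¬ neg m k)
    (hM6 : ∀ w, w ∉ S → (∀ x, ¬ pos x w) → (∀ x ∈ T, ¬ neg x w) → ¬ neg w b →
      w ∉ M' → ∃ m ∈ M', neg m w) :
    IsFixedSet p' n' (insert b (T ∪ M')) := by
  have hne : a ≠ b := fun h => hpi a (h ▸ hab)
  have haT : a ∉ T := fun h => ((hT a).mp h).2.1 rfl
  have hbT : b ∉ T := fun h => ((hT b).mp h).2.2 rfl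
  have haM : a ∉ M' := fun h => hM1 a h haS
  have hbM : b ∉ M' := fun h => hM1 b h hbS
  have haR : a ∉ insert b (T ∪ M') := by
    intro hc
    rcases Set.mem_insert_iff.mp hc with h | h
    · exact hne h
    · rcases h with h | h
      · exact haT h
      · exact haM h
  intro v
  rcases eq_or_ne v b with hvb | hvb
  · rw [hvb]
    refine iff_of_true (Set.mem_insert _ _) ⟨?_, ?_⟩
    · intro u hu
      exfalso
      obtain ⟨hpu, hpat⟩ := (hp' u b).mp hu
      have : u = a := hmatch b u a (hps hpu) (hps hab)
      exact hpat (Or.inl ⟨this, rfl⟩)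
    · intro u hu
      rcases (hn' u b).mp hu with h | ⟨h1, h2⟩ | ⟨h1, h2⟩
      · -- neg u b
        have huS : u ∉ S := (fs_mem pos neg hF hbS).2 u h
        intro hc
        rcases Set.mem_insert_iff.mp hc with h2 | h2
        · rw [h2] at h; exact hni b h
        · rcases h2 with h2 | h2
          · exact huS ((hT u).mp h2).1
          · exact hM4 u h2 h
      · rw [h1]; exact haR
      · exact absurd h2.symm hne
  rcases eq_or_ne v a with hva | hva
  · rw [hva]
    refine iff_of_false haR ?_
    rintro ⟨c1, c2⟩
    exact c2 b ((hn' b a).mpr (Or.inr (Or.inr ⟨rfl, rfl⟩))) (Set.mem_insert _ _)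
  -- generic vertex v ≠ a, b
  have hp'v : ∀ u, p' u v ↔ pos u v := by
    intro u
    rw [hp']
    exact ⟨fun h => h.1, fun h => ⟨h, by rintro (⟨h1, h2⟩ | ⟨h1, h2⟩); exacts [hvb h2, hva h2]⟩⟩
  have hn'v : ∀ u, n' u v ↔ neg u v := by
    intro u
    rw [hn']
    constructor
    · rintro (h | ⟨h1, h2⟩ | ⟨h1, h2⟩)
      · exact h
      · exact absurd h2 hvb
      · exact absurd h2 hva
    · exact fun h => Or.inl h
  have hvR : v ∈ insert b (T ∪ M') ↔ (v ∈ T ∨ v ∈ M') := by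
    rw [Set.mem_insert_iff]
    exact ⟨fun h => h.resolve_left hvb, fun h => Or.inr h⟩
  by_cases hvT : v ∈ T
  · have hvS : v ∈ S := ((hT v).mp hvT).1
    refine iff_of_true (hvR.mpr (Or.inl hvT)) ⟨?_, ?_⟩
    · intro u hu
      have hpu : pos u v := (hp'v u).mp hu
      have huS : u ∈ S := (fs_mem pos neg hF hvS).1 u hpu
      have hua : u ≠ a := by
        intro h; rw [h] at hpu
        exact hvb (hmatch a b v hab hpu).symm
      have hub : u ≠ b := by
        intro h; rw [h] at hpu
        exact hva (hmatch b a v (hps hab) hpu).symm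
      exact Set.mem_insert_of_mem _ (Or.inl ((hT u).mpr ⟨huS, hua, hub⟩))
    · intro u hu
      have hnu : neg u v := (hn'v u).mp hu
      have huS : u ∉ S := (fs_mem pos neg hF hvS).2 u hnu
      intro hc
      rcases Set.mem_insert_iff.mp hc with h | h
      · rw [h] at huS; exact huS hbS
      · rcases h with h | h
        · exact huS ((hT u).mp h).1
        · exact hM3 u h v hvT (hns hnu)
  by_cases hvM : v ∈ M'
  · refine iff_of_true (hvR.mpr (Or.inr hvM)) ⟨?_, ?_⟩
    · intro u hu
      exact absurd ((hp'v u).mp hu) (hM2 v hvM u)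
    · intro u hu
      have hnu : neg u v := (hn'v u).mp hu
      intro hc
      rcases Set.mem_insert_iff.mp hc with h | h
      · rw [h] at hnu; exact hM4 v hvM (hns hnu)
      · rcases h with h | h
        · exact hM3 v hvM u h hnu
        · exact hM5 u h v hvM hnu
  -- v outside everything
  have hvS : v ∉ S := fun h => hvT ((hT v).mpr ⟨h, hva, hvb⟩)
  refine iff_of_false (fun hc => by
    rcases Set.mem_insert_iff.mp hc with h | h
    · exact hvb h
    · rcases h with h | h
      · exact hvT h
      · exact hvM h) ?_
  rintro ⟨c1, c2⟩
  by_cases hav : neg a v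
  · -- v is an "a-only" vertex: use maximality of M'
    have hvun : ∀ x, ¬ pos x v := by
      intro x hx
      have hxR := c1 x ((hp'v x).mpr hx)
      rcases Set.mem_insert_iff.mp hxR with h | h
      · rw [h] at hx
        exact hva (hmatch b a v (hps hab) hx).symm
      · rcases h with h | h
        · exact hvS ((fs_mem pos neg hF ((hT x).mp h).1).1 v (hps hx))
        · exact hM2 x h v (hps hx)
    have hvTn : ∀ x ∈ T, ¬ neg x v := by
      intro x hx hnx
      exact c2 x ((hn'v x).mpr hnx) (Set.mem_insert_of_mem _ (Or.inl hx))
    have hvb' : ¬ neg v b := by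
      intro h
      exact c2 b ((hn'v b).mpr (hns h)) (Set.mem_insert _ _)
    obtain ⟨m, hm, hmv⟩ := hM6 v hvS hvun hvTn hvb' hvM
    exact c2 m ((hn'v m).mpr hmv) (Set.mem_insert_of_mem _ (Or.inr hm))
  · -- otherwise v would belong to S
    apply hvS
    apply (hF v).mpr
    constructor
    · intro u hu
      have hxR := c1 u ((hp'v u).mpr hu)
      rcases Set.mem_insert_iff.mp hxR with h | h
      · rw [h] at hu
        exact absurd (hmatch b a v (hps hab) hu).symm hva
      · rcases h with h | h
        · exact ((hT u).mp h).1
        · exact absurd (hps hu) (hM2 u h v)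
    · intro u hnu huS
      rcases eq_or_ne u a with h | h
      · rw [h] at hnu; exact hav hnu
      rcases eq_or_ne u b with h2 | h2
      · rw [h2] at hnu
        exact c2 b ((hn'v b).mpr hnu) (Set.mem_insert _ _)
      · exact c2 u ((hn'v u).mpr hnu)
          (Set.mem_insert_of_mem _ (Or.inl ((hT u).mpr ⟨huS, h, h2⟩)))

-- C4 extraction from a "doubly colliding" fixed set.
lemma extract_C4
    (hps : Symmetric pos) (hns : Symmetric neg) (hpi : ∀ v, ¬ pos v v)
    (hni : ∀ v, ¬ neg v v)
    (hmatch : ∀ u v w, pos u v → pos u w → v = w) (hab : pos a b)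
    {S T : Set V} (hF : IsFixedSet pos neg S) (haS : a ∈ S) (hbS : b ∈ S)
    (hT : ∀ x, x ∈ T ↔ (x ∈ S ∧ x ≠ a ∧ x ≠ b))
    (m' : V) (h1 : m' ∉ S) (h2 : ∀ x, ¬ pos x m') (h3 : ∀ x ∈ T, ¬ neg x m')
    (h4 : ¬ neg m' b)
    {M₂ : Set V} (hK1 : ∀ m ∈ M₂, m ∉ S) (hK2 : ∀ m ∈ M₂, ∀ x, ¬ pos x m)
    (hK3 : ∀ m ∈ M₂, ∀ x ∈ T, ¬ neg x m) (hK4 : ∀ m ∈ M₂, ¬ neg m a)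
    (hEF : IsFixedSet pos neg (T ∪ M₂)) :
    ∃ u v, IsInducedC4 (fun x y => pos x y ∨ neg x y) a b u v ∧
      (∀ w, ¬ pos u w) ∧ (∀ w, ¬ pos v w) := by
  have hne : a ≠ b := fun h => hpi a (h ▸ hab)
  -- first: neg a m'
  have hdom : ∃ u, neg u m' ∧ u ∈ S := by
    by_contra hc
    push_neg at hc
    exact h1 ((hF m').mpr ⟨fun u hu => absurd hu (h2 u), fun u hu hu' => hc u hu hu'⟩)
  have ham' : neg a m' := by
    obtain ⟨u, hu, huS⟩ := hdom
    rcases eq_or_ne u a with h | h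
    · rw [h] at hu; exact hu
    rcases eq_or_ne u b with h' | h'
    · rw [h'] at hu; exact absurd (hns hu) h4
    · exact absurd hu (h3 u ((hT u).mpr ⟨huS, h, h'⟩))
  have hm'Q : m' ∉ T ∪ M₂ := by
    rintro (h | h)
    · exact h1 ((hT m').mp h).1
    · exact hK4 m' h (hns ham')
  obtain ⟨m, hmM, hmm'⟩ : ∃ m ∈ M₂, neg m m' := by
    by_contra hc
    push_neg at hc
    apply hm'Q
    apply (hEF m').mpr
    refine ⟨fun u hu => absurd hu (h2 u), ?_⟩
    rintro u hu (huT | huM)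
    · exact h3 u huT hu
    · exact hc u huM hu
  have hmS : m ∉ S := hK1 m hmM
  have hbm : neg b m := by
    have hdm : ∃ u, neg u m ∧ u ∈ S := by
      by_contra hc
      push_neg at hc
      exact hmS ((hF m).mpr ⟨fun u hu => absurd hu (hK2 m hmM u),
        fun u hu hu' => hc u hu hu'⟩)
    obtain ⟨u, hu, huS⟩ := hdm
    rcases eq_or_ne u a with h | h
    · rw [h] at hu; exact absurd (hns hu) (hK4 m hmM)
    rcases eq_or_ne u b with h' | h'
    · rw [h'] at hu; exact hu
    · exact absurd hu (hK3 m hmM u ((hT u).mpr ⟨huS, h, h'⟩))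
  have hmun : ∀ w, ¬ pos m w := fun w hw => hK2 m hmM w (hps hw)
  have hm'un : ∀ w, ¬ pos m' w := fun w hw => h2 w (hps hw)
  refine ⟨m, m', ⟨hne, ?_, ?_, ?_, ?_, ?_, Or.inl hab, Or.inr hbm,
    Or.inr hmm', Or.inr (hns ham'), ?_, ?_⟩, hmun, hm'un⟩
  · exact fun h => hmS (h ▸ haS)
  · exact fun h => h1 (h ▸ haS)
  · exact fun h => hmS (h ▸ hbS)
  · exact fun h => h1 (h ▸ hbS)
  · exact fun h => hni m' (h ▸ hmm')
  · rintro (h | h)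
    · exact hmS ((hmatch a b m hab h) ▸ hbS)
    · exact hK4 m hmM (hns h)
  · rintro (h | h)
    · exact h1 ((hmatch b a m' (hps hab) h) ▸ haS)
    · exact h4 (hns h)

end Aux


lemma exists_maxIndep {V : Type*} [Finite V] (neg : V → V → Prop)
    (hns : Symmetric neg) (hni : ∀ v, ¬ neg v v) (X : Set V) :
    ∃ M, M ⊆ X ∧ (∀ m ∈ M, ∀ k ∈ M, ¬ neg m k) ∧
      (∀ x ∈ X, x ∉ M → ∃ m ∈ M, neg m x) := by
  classical
  set 𝒮 : Set (Set V) := {M | M ⊆ X ∧ ∀ m ∈ M, ∀ k ∈ M, ¬ neg m k} with h𝒮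
  have hfin : 𝒮.Finite := Set.toFinite _
  have hne : 𝒮.Nonempty := ⟨∅, by simp [h𝒮]⟩
  obtain ⟨M, hM, hmax⟩ := Set.Finite.exists_maximalFor id 𝒮 hfin hne
  refine ⟨M, hM.1, hM.2, ?_⟩
  intro x hx hxM
  by_contra hno
  push_neg at hno
  have hmem : insert x M ∈ 𝒮 := by
    constructor
    · exact Set.insert_subset hx hM.1
    · intro m hm k hk
      rcases Set.mem_insert_iff.1 hm with hm | hm
      · rcases Set.mem_insert_iff.1 hk with hk | hk
        · rw [hm, hk]; exact hni x
        · rw [hm]; exact fun h => hno k hk (hns h)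
      · rcases Set.mem_insert_iff.1 hk with hk | hk
        · rw [hk]; exact fun h => hno m hm h
        · exact hM.2 m hm k hk
  have heq : id M = id (insert x M) := le_antisymm (Set.subset_insert x M) (hmax hmem (Set.subset_insert x M))
  simp only [id] at heq
  exact hxM (heq ▸ Set.mem_insert x M)



/-- Let `G` be a simple signed graph whose positive edges form a matching and let `ab`
be a positive edge; let `G'` be obtained by making `ab` negative. If `G` has an
induced 4-cycle through `a, b` in which `a` and `b` are the only vertices adjacent to a
positive edge, then `fix(G) ≤ (3/2)·fix(G')`; otherwise `fix(G) ≤ fix(G')`. -/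
theorem stmt11 {V : Type*} [Fintype V] (pos neg : V → V → Prop)
    (hps : Symmetric pos) (hns : Symmetric neg)
    (hpi : ∀ v, ¬ pos v v) (hni : ∀ v, ¬ neg v v)
    (hd : ∀ u v, pos u v → ¬ neg u v)
    (hmatch : ∀ u v w, pos u v → pos u w → v = w)
    (a b : V) (hab : pos a b) :
    ((∃ u v, IsInducedC4 (fun x y => pos x y ∨ neg x y) a b u v ∧
        (∀ w, ¬ pos u w) ∧ (∀ w, ¬ pos v w)) →
      (fixc pos neg : ℚ) ≤ 3 / 2 *
        fixc (fun u v => pos u v ∧ ¬ ((u = a ∧ v = b) ∨ (u = b ∧ v = a)))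
          (fun u v => neg u v ∨ (u = a ∧ v = b) ∨ (u = b ∧ v = a))) ∧
    ((¬ ∃ u v, IsInducedC4 (fun x y => pos x y ∨ neg x y) a b u v ∧
        (∀ w, ¬ pos u w) ∧ (∀ w, ¬ pos v w)) →
      fixc pos neg ≤
        fixc (fun u v => pos u v ∧ ¬ ((u = a ∧ v = b) ∨ (u = b ∧ v = a)))
          (fun u v => neg u v ∨ (u = a ∧ v = b) ∨ (u = b ∧ v = a))) := by
  classical
  obtain ⟨d, hd1, hd2, hd3⟩ :
      ∃ d : ℕ,
        fixc pos neg ≤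
          fixc (fun u v => pos u v ∧ ¬ ((u = a ∧ v = b) ∨ (u = b ∧ v = a)))
            (fun u v => neg u v ∨ (u = a ∧ v = b) ∨ (u = b ∧ v = a)) + d ∧
        2 * d ≤
          fixc (fun u v => pos u v ∧ ¬ ((u = a ∧ v = b) ∨ (u = b ∧ v = a)))
            (fun u v => neg u v ∨ (u = a ∧ v = b) ∨ (u = b ∧ v = a)) ∧
        (d ≠ 0 → ∃ u v, IsInducedC4 (fun x y => pos x y ∨ neg x y) a b u v ∧
          (∀ w, ¬ pos u w) ∧ (∀ w, ¬ pos v w)) := by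
    classical
    have hba : pos b a := hps hab
    have hne : a ≠ b := fun h => hpi a (h ▸ hab)
    set p' : V → V → Prop :=
      fun u v => pos u v ∧ ¬ ((u = a ∧ v = b) ∨ (u = b ∧ v = a)) with hp'def
    set n' : V → V → Prop :=
      fun u v => neg u v ∨ (u = a ∧ v = b) ∨ (u = b ∧ v = a) with hn'def
    have hp'ab : ∀ u v, p' u v ↔ (pos u v ∧ ¬ ((u = a ∧ v = b) ∨ (u = b ∧ v = a))) :=
      fun u v => Iff.rfl
    have hn'ab : ∀ u v, n' u v ↔ (neg u v ∨ (u = a ∧ v = b) ∨ (u = b ∧ v = a)) :=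
      fun u v => Iff.rfl
    have hp'ba : ∀ u v, p' u v ↔ (pos u v ∧ ¬ ((u = b ∧ v = a) ∨ (u = a ∧ v = b))) :=
      fun u v => by rw [hp'ab]; tauto
    have hn'ba : ∀ u v, n' u v ↔ (neg u v ∨ (u = b ∧ v = a) ∨ (u = a ∧ v = b)) :=
      fun u v => by rw [hn'ab]; tauto
    choose sel hsel1 hsel2 hsel3 using fun X => exists_maxIndep neg hns hni X
    set T : Set V → Set V := fun S => {x | x ∈ S ∧ x ≠ a ∧ x ≠ b} with hT
    set UA : Set V → Set V :=
      fun S => {w | w ∉ S ∧ (∀ x, ¬ pos x w) ∧ (∀ x ∈ T S, ¬ neg x w) ∧ ¬ neg w b} with hUA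
    set UB : Set V → Set V :=
      fun S => {w | w ∉ S ∧ (∀ x, ¬ pos x w) ∧ (∀ x ∈ T S, ¬ neg x w) ∧ ¬ neg w a} with hUB
    set MB : Set V → Set V := fun S => sel (UA S) with hMB
    set MA : Set V → Set V := fun S => sel (UB S) with hMA
    have hTc : ∀ S x, x ∈ T S ↔ (x ∈ S ∧ x ≠ a ∧ x ≠ b) := fun S x => Iff.rfl
    have hbmem : ∀ S : Set V, IsFixedSet pos neg S → a ∈ S → b ∈ S :=
      fun S hF h => ((hF a).mp h).1 b hba
    have hamem : ∀ S : Set V, IsFixedSet pos neg S → b ∈ S → a ∈ S :=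
      fun S hF h => ((hF b).mp h).1 a hab
    have negoutA : ∀ S : Set V, IsFixedSet pos neg S → a ∈ S → ∀ x, neg x a → x ∉ S :=
      fun S hF h x hx => ((hF a).mp h).2 x hx
    have negoutB : ∀ S : Set V, IsFixedSet pos neg S → b ∈ S → ∀ x, neg x b → x ∉ S :=
      fun S hF h x hx => ((hF b).mp h).2 x hx
    -- every element of UA S is a negative neighbour of a (for S fixed),
    have hUAa : ∀ S : Set V, IsFixedSet pos neg S → ∀ w ∈ UA S, neg w a := by
      intro S hF w hw
      obtain ⟨hw1, hw2, hw3, hw4⟩ := hw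
      have hex : ∃ u, neg u w ∧ u ∈ S := by
        by_contra hc
        push_neg at hc
        exact hw1 ((hF w).mpr ⟨fun u hu => absurd hu (hw2 u), fun u hu => hc u hu⟩)
      obtain ⟨u, hu, huS⟩ := hex
      rcases eq_or_ne u a with h | h
      · rw [h] at hu; exact hns hu
      rcases eq_or_ne u b with h2 | h2
      · rw [h2] at hu; exact absurd (hns hu) hw4
      · exact absurd hu (hw3 u ⟨huS, h, h2⟩)
    have hUBb : ∀ S : Set V, IsFixedSet pos neg S → ∀ w ∈ UB S, neg w b := by
      intro S hF w hw
      obtain ⟨hw1, hw2, hw3, hw4⟩ := hw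
      have hex : ∃ u, neg u w ∧ u ∈ S := by
        by_contra hc
        push_neg at hc
        exact hw1 ((hF w).mpr ⟨fun u hu => absurd hu (hw2 u), fun u hu => hc u hu⟩)
      obtain ⟨u, hu, huS⟩ := hex
      rcases eq_or_ne u b with h | h
      · rw [h] at hu; exact hns hu
      rcases eq_or_ne u a with h2 | h2
      · rw [h2] at hu; exact absurd (hns hu) hw4
      · exact absurd hu (hw3 u ⟨huS, h2, h⟩)
    -- membership facts for the images
    have haTMB : ∀ S : Set V, a ∈ S → a ∉ T S ∪ MB S := by
      rintro S haS (h | h)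
      · exact h.2.1 rfl
      · exact (hsel1 (UA S) h).1 haS
    have hbTMB : ∀ S : Set V, b ∈ S → b ∉ T S ∪ MB S := by
      rintro S hbS (h | h)
      · exact h.2.2 rfl
      · exact (hsel1 (UA S) h).1 hbS
    have haTMA : ∀ S : Set V, a ∈ S → a ∉ T S ∪ MA S := by
      rintro S haS (h | h)
      · exact h.2.1 rfl
      · exact (hsel1 (UB S) h).1 haS
    have hbTMA : ∀ S : Set V, b ∈ S → b ∉ T S ∪ MA S := by
      rintro S hbS (h | h)
      · exact h.2.2 rfl
      · exact (hsel1 (UB S) h).1 hbS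
    have haRb : ∀ S : Set V, a ∈ S → a ∉ insert b (T S ∪ MB S) := by
      intro S haS hc
      rcases Set.mem_insert_iff.mp hc with h | h
      · exact hne h
      · exact haTMB S haS h
    have hbRa : ∀ S : Set V, IsFixedSet pos neg S → a ∈ S → b ∉ insert a (T S ∪ MA S) := by
      intro S hF haS hc
      rcases Set.mem_insert_iff.mp hc with h | h
      · exact hne h.symm
      · exact hbTMA S (hbmem S hF haS) h
    -- recovery
    have hrecB : ∀ S : Set V, IsFixedSet pos neg S → a ∈ S → ∀ x, x ≠ a → x ≠ b →
        (x ∈ S ↔ (x ∈ insert b (T S ∪ MB S) ∧ ¬ neg x a)) := by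
      intro S hF haS x hxa hxb
      constructor
      · intro hxS
        exact ⟨Set.mem_insert_of_mem _ (Or.inl ⟨hxS, hxa, hxb⟩),
          fun h => negoutA S hF haS x h hxS⟩
      · rintro ⟨hxR, hxna⟩
        rcases Set.mem_insert_iff.mp hxR with h | h
        · exact absurd h hxb
        rcases h with h | h
        · exact h.1
        · exact absurd (hUAa S hF x (hsel1 (UA S) h)) hxna
    have hrecA : ∀ S : Set V, IsFixedSet pos neg S → a ∈ S → ∀ x, x ≠ a → x ≠ b →
        (x ∈ S ↔ (x ∈ insert a (T S ∪ MA S) ∧ ¬ neg x b)) := by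
      intro S hF haS x hxa hxb
      constructor
      · intro hxS
        exact ⟨Set.mem_insert_of_mem _ (Or.inl ⟨hxS, hxa, hxb⟩),
          fun h => negoutB S hF (hbmem S hF haS) x h hxS⟩
      · rintro ⟨hxR, hxnb⟩
        rcases Set.mem_insert_iff.mp hxR with h | h
        · exact absurd h hxa
        rcases h with h | h
        · exact h.1
        · exact absurd (hUBb S hF x (hsel1 (UB S) h)) hxnb
    have hinjB : ∀ S₁ S₂ : Set V, IsFixedSet pos neg S₁ → a ∈ S₁ →
        IsFixedSet pos neg S₂ → a ∈ S₂ →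
        insert b (T S₁ ∪ MB S₁) = insert b (T S₂ ∪ MB S₂) → S₁ = S₂ := by
      intro S₁ S₂ hF1 ha1 hF2 ha2 heq
      ext x
      rcases eq_or_ne x a with h | hxa
      · rw [h]; exact iff_of_true ha1 ha2
      rcases eq_or_ne x b with h | hxb
      · rw [h]; exact iff_of_true (hbmem S₁ hF1 ha1) (hbmem S₂ hF2 ha2)
      rw [hrecB S₁ hF1 ha1 x hxa hxb, hrecB S₂ hF2 ha2 x hxa hxb, heq]
    have hinjA : ∀ S₁ S₂ : Set V, IsFixedSet pos neg S₁ → a ∈ S₁ →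
        IsFixedSet pos neg S₂ → a ∈ S₂ →
        insert a (T S₁ ∪ MA S₁) = insert a (T S₂ ∪ MA S₂) → S₁ = S₂ := by
      intro S₁ S₂ hF1 ha1 hF2 ha2 heq
      ext x
      rcases eq_or_ne x a with h | hxa
      · rw [h]; exact iff_of_true ha1 ha2
      rcases eq_or_ne x b with h | hxb
      · rw [h]; exact iff_of_true (hbmem S₁ hF1 ha1) (hbmem S₂ hF2 ha2)
      rw [hrecA S₁ hF1 ha1 x hxa hxb, hrecA S₂ hF2 ha2 x hxa hxb, heq]
    have hinsert : ∀ (c : V) (X Y : Set V), c ∉ X → c ∉ Y → insert c X = insert c Y → X = Y := by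
      intro c X Y hX hY h
      ext x
      constructor
      · intro hx
        have hx2 : x ∈ insert c Y := h ▸ Set.mem_insert_of_mem _ hx
        rcases Set.mem_insert_iff.mp hx2 with h2 | h2
        · rw [h2] at hx; exact absurd hx hX
        · exact h2
      · intro hx
        have hx2 : x ∈ insert c X := h ▸ Set.mem_insert_of_mem _ hx
        rcases Set.mem_insert_iff.mp hx2 with h2 | h2
        · rw [h2] at hx; exact absurd hx hY
        · exact h2
    -- the images are fixed sets of the modified network
    have himgB : ∀ S : Set V, IsFixedSet pos neg S → a ∈ S →
        IsFixedSet p' n' (insert b (T S ∪ MB S)) := by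
      intro S hF haS
      refine fix_broute pos neg a b p' n' hps hns hpi hni hmatch hab hp'ab hn'ab hF haS
        (hbmem S hF haS) (hTc S) ?_ ?_ ?_ ?_ ?_ ?_
      · exact fun m hm => (hsel1 (UA S) hm).1
      · exact fun m hm => (hsel1 (UA S) hm).2.1
      · exact fun m hm => (hsel1 (UA S) hm).2.2.1
      · exact fun m hm => (hsel1 (UA S) hm).2.2.2
      · exact hsel2 (UA S)
      · exact fun w h1 h2 h3 h4 h5 => hsel3 (UA S) w ⟨h1, h2, h3, h4⟩ h5
    have himgA : ∀ S : Set V, IsFixedSet pos neg S → a ∈ S →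
        IsFixedSet p' n' (insert a (T S ∪ MA S)) := by
      intro S hF haS
      refine fix_broute pos neg b a p' n' hps hns hpi hni hmatch hba hp'ba hn'ba hF
        (hbmem S hF haS) haS (fun x => by rw [hTc]; tauto) ?_ ?_ ?_ ?_ ?_ ?_
      · exact fun m hm => (hsel1 (UB S) hm).1
      · exact fun m hm => (hsel1 (UB S) hm).2.1
      · exact fun m hm => (hsel1 (UB S) hm).2.2.1
      · exact fun m hm => (hsel1 (UB S) hm).2.2.2
      · exact hsel2 (UB S)
      · exact fun w h1 h2 h3 h4 h5 => hsel3 (UB S) w ⟨h1, h2, h3, h4⟩ h5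
    -- the map and the exceptional family
    set Φ : Set V → Set V := fun S =>
      if a ∈ S then
        (if IsFixedSet pos neg (T S ∪ MB S) ∧ (MB S).Nonempty then insert a (T S ∪ MA S)
         else insert b (T S ∪ MB S))
      else if ∀ x, neg x a → x ∉ S then insert a S
      else if ∀ x, neg x b → x ∉ S then insert b S
      else S with hΦ
    set D : Set (Set V) := {S | IsFixedSet pos neg S ∧ a ∈ S ∧
      (IsFixedSet pos neg (T S ∪ MB S) ∧ (MB S).Nonempty) ∧
      IsFixedSet pos neg (T S ∪ MA S)} with hD
    have hDF : D ⊆ {S : Set V | IsFixedSet pos neg S} := fun S hS => hS.1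
    -- map into the fixed sets of the modified network
    have hmaps : ∀ S ∈ ({S : Set V | IsFixedSet pos neg S} \ D),
        Φ S ∈ {S : Set V | IsFixedSet p' n' S} := by
      rintro S ⟨hF, -⟩
      simp only [hΦ]
      by_cases haS : a ∈ S
      · rw [if_pos haS]
        by_cases hbc : IsFixedSet pos neg (T S ∪ MB S) ∧ (MB S).Nonempty
        · rw [if_pos hbc]; exact himgA S hF haS
        · rw [if_neg hbc]; exact himgB S hF haS
      · rw [if_neg haS]
        have hbS : b ∉ S := fun h => haS (hamem S hF h)
        by_cases h1 : ∀ x, neg x a → x ∉ S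
        · rw [if_pos h1]
          exact fix_addA pos neg a b p' n' hps hns hpi hni hmatch hab hp'ab hn'ab hF
            haS hbS h1
        · rw [if_neg h1]
          by_cases h2 : ∀ x, neg x b → x ∉ S
          · rw [if_pos h2]
            exact fix_addA pos neg b a p' n' hps hns hpi hni hmatch hba hp'ba hn'ba hF
              hbS haS h2
          · rw [if_neg h2]
            push_neg at h1 h2
            obtain ⟨x, hx1, hx2⟩ := h1
            obtain ⟨y, hy1, hy2⟩ := h2
            exact fix_keep pos neg a b p' n' hns hp'ab hn'ab hF haS hbS
              ⟨x, hx2, hx1⟩ ⟨y, hy2, hy1⟩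
    -- injectivity
    have hmix : ∀ S₁ S₂ : Set V, S₁ ∈ ({S : Set V | IsFixedSet pos neg S} \ D) →
        S₂ ∈ ({S : Set V | IsFixedSet pos neg S} \ D) → a ∈ S₁ → a ∉ S₂ →
        Φ S₁ = Φ S₂ → S₁ = S₂ := by
      rintro S₁ S₂ ⟨hF1, hD1⟩ ⟨hF2, hD2⟩ ha1 ha2 heq
      exfalso
      have hb2 : b ∉ S₂ := fun h => ha2 (hamem S₂ hF2 h)
      simp only [hΦ, if_pos ha1, if_neg ha2] at heq
      by_cases hbc : IsFixedSet pos neg (T S₁ ∪ MB S₁) ∧ (MB S₁).Nonempty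
      · rw [if_pos hbc] at heq
        by_cases h1 : ∀ x, neg x a → x ∉ S₂
        · rw [if_pos h1] at heq
          -- a-side collision: S₂ = T S₁ ∪ MA S₁ is a fixed set, so S₁ ∈ D
          have h2 : T S₁ ∪ MA S₁ = S₂ :=
            hinsert a _ _ (haTMA S₁ ha1) ha2 heq
          exact hD1 ⟨hF1, ha1, hbc, h2 ▸ hF2⟩
        · rw [if_neg h1] at heq
          by_cases h2 : ∀ x, neg x b → x ∉ S₂
          · rw [if_pos h2] at heq
            -- left image contains a, right image does not
            have : a ∈ insert b S₂ := heq ▸ Set.mem_insert a (T S₁ ∪ MA S₁)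
            rcases Set.mem_insert_iff.mp this with h | h
            · exact hne h
            · exact ha2 h
          · rw [if_neg h2] at heq
            exact ha2 (heq ▸ Set.mem_insert a (T S₁ ∪ MA S₁))
      · rw [if_neg hbc] at heq
        by_cases h1 : ∀ x, neg x a → x ∉ S₂
        · rw [if_pos h1] at heq
          have : b ∈ insert a S₂ := heq ▸ Set.mem_insert b (T S₁ ∪ MB S₁)
          rcases Set.mem_insert_iff.mp this with h | h
          · exact hne h.symm
          · exact hb2 h
        · rw [if_neg h1] at heq
          by_cases h2 : ∀ x, neg x b → x ∉ S₂
          · rw [if_pos h2] at heq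
            -- b-side collision: S₂ = T S₁ ∪ MB S₁ fixed, so MB S₁ = ∅, but then
            -- S₂ has no negative neighbour of a, contradicting ¬h1
            have h3 : T S₁ ∪ MB S₁ = S₂ :=
              hinsert b _ _ (hbTMB S₁ (hbmem S₁ hF1 ha1)) hb2 heq
            have hMBe : ¬ (MB S₁).Nonempty := fun hne' => hbc ⟨h3 ▸ hF2, hne'⟩
            push_neg at h1
            obtain ⟨x, hx1, hx2⟩ := h1
            rw [← h3] at hx2
            rcases hx2 with h | h
            · exact negoutA S₁ hF1 ha1 x hx1 h.1
            · exact hMBe ⟨x, h⟩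
          · rw [if_neg h2] at heq
            exact hb2 (heq ▸ Set.mem_insert b (T S₁ ∪ MB S₁))
    have hinj : Set.InjOn Φ ({S : Set V | IsFixedSet pos neg S} \ D) := by
      intro S₁ hS₁ S₂ hS₂ heq
      by_cases ha1 : a ∈ S₁ <;> by_cases ha2 : a ∈ S₂
      · obtain ⟨hF1, hD1⟩ := hS₁
        obtain ⟨hF2, hD2⟩ := hS₂
        simp only [hΦ, if_pos ha1, if_pos ha2] at heq
        by_cases hb1 : IsFixedSet pos neg (T S₁ ∪ MB S₁) ∧ (MB S₁).Nonempty <;>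
          by_cases hb2 : IsFixedSet pos neg (T S₂ ∪ MB S₂) ∧ (MB S₂).Nonempty
        · rw [if_pos hb1, if_pos hb2] at heq
          exact hinjA _ _ hF1 ha1 hF2 ha2 heq
        · rw [if_pos hb1, if_neg hb2] at heq
          exact absurd (heq ▸ Set.mem_insert a (T S₁ ∪ MA S₁)) (haRb S₂ ha2)
        · rw [if_neg hb1, if_pos hb2] at heq
          exact absurd (heq.symm ▸ Set.mem_insert a (T S₂ ∪ MA S₂)) (haRb S₁ ha1)
        · rw [if_neg hb1, if_neg hb2] at heq
          exact hinjB _ _ hF1 ha1 hF2 ha2 heq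
      · exact hmix S₁ S₂ hS₁ hS₂ ha1 ha2 heq
      · exact (hmix S₂ S₁ hS₂ hS₁ ha2 ha1 heq.symm).symm
      · obtain ⟨hF1, -⟩ := hS₁
        obtain ⟨hF2, -⟩ := hS₂
        have hb1 : b ∉ S₁ := fun h => ha1 (hamem S₁ hF1 h)
        have hb2 : b ∉ S₂ := fun h => ha2 (hamem S₂ hF2 h)
        simp only [hΦ, if_neg ha1, if_neg ha2] at heq
        by_cases h11 : ∀ x, neg x a → x ∉ S₁ <;> by_cases h21 : ∀ x, neg x a → x ∉ S₂
        · rw [if_pos h11, if_pos h21] at heq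
          exact hinsert a _ _ ha1 ha2 heq
        · rw [if_pos h11, if_neg h21] at heq
          exfalso
          by_cases h22 : ∀ x, neg x b → x ∉ S₂
          · rw [if_pos h22] at heq
            have : a ∈ insert b S₂ := heq ▸ Set.mem_insert a S₁
            rcases Set.mem_insert_iff.mp this with h | h
            · exact hne h
            · exact ha2 h
          · rw [if_neg h22] at heq
            exact ha2 (heq ▸ Set.mem_insert a S₁)
        · rw [if_neg h11, if_pos h21] at heq
          exfalso
          by_cases h12 : ∀ x, neg x b → x ∉ S₁
          · rw [if_pos h12] at heq
            have : a ∈ insert b S₁ := heq.symm ▸ Set.mem_insert a S₂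
            rcases Set.mem_insert_iff.mp this with h | h
            · exact hne h
            · exact ha1 h
          · rw [if_neg h12] at heq
            exact ha1 (heq.symm ▸ Set.mem_insert a S₂)
        · rw [if_neg h11, if_neg h21] at heq
          by_cases h12 : ∀ x, neg x b → x ∉ S₁ <;> by_cases h22 : ∀ x, neg x b → x ∉ S₂
          · rw [if_pos h12, if_pos h22] at heq
            exact hinsert b _ _ hb1 hb2 heq
          · rw [if_pos h12, if_neg h22] at heq
            exact absurd (heq ▸ Set.mem_insert b S₁) hb2
          · rw [if_neg h12, if_pos h22] at heq
            exact absurd (heq.symm ▸ Set.mem_insert b S₂) hb1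
          · rw [if_neg h12, if_neg h22] at heq
            exact heq
    have hfix : fixc pos neg = Set.ncard {S : Set V | IsFixedSet pos neg S} := rfl
    have hfix' : fixc p' n' = Set.ncard {S : Set V | IsFixedSet p' n' S} := rfl
    have hcard1 : fixc pos neg ≤ fixc p' n' + D.ncard := by
      have e1 : {S : Set V | IsFixedSet pos neg S} =
          ({S : Set V | IsFixedSet pos neg S} \ D) ∪ D :=
        (Set.diff_union_of_subset hDF).symm
      have e2 : ({S : Set V | IsFixedSet pos neg S} \ D).ncard ≤ fixc p' n' := by
        rw [hfix']
        exact Set.ncard_le_ncard_of_injOn Φ hmaps hinj (Set.toFinite _)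
      calc fixc pos neg
          = (({S : Set V | IsFixedSet pos neg S} \ D) ∪ D).ncard := by rw [hfix, ← e1]
        _ ≤ ({S : Set V | IsFixedSet pos neg S} \ D).ncard + D.ncard :=
            Set.ncard_union_le _ _
        _ ≤ fixc p' n' + D.ncard := Nat.add_le_add_right e2 _
    have hcard2 : 2 * D.ncard ≤ fixc p' n' := by
      have hsub : ((fun S => insert a (T S ∪ MA S)) '' D) ∪
          ((fun S => insert b (T S ∪ MB S)) '' D) ⊆ {S : Set V | IsFixedSet p' n' S} := by
        rintro R (⟨S, hS, rfl⟩ | ⟨S, hS, rfl⟩)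
        · exact himgA S hS.1 hS.2.1
        · exact himgB S hS.1 hS.2.1
      have hdisj : Disjoint ((fun S => insert a (T S ∪ MA S)) '' D)
          ((fun S => insert b (T S ∪ MB S)) '' D) := by
        rw [Set.disjoint_left]
        rintro R ⟨S, hS, rfl⟩ ⟨S', hS', hR⟩
        simp only at hR
        have : a ∈ insert b (T S' ∪ MB S') := by
          rw [hR]; exact Set.mem_insert a (T S ∪ MA S)
        exact haRb S' hS'.2.1 this
      have hiA : ((fun S => insert a (T S ∪ MA S)) '' D).ncard = D.ncard :=
        Set.ncard_image_of_injOn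
          (fun S₁ h₁ S₂ h₂ heq => hinjA _ _ h₁.1 h₁.2.1 h₂.1 h₂.2.1 heq)
      have hiB : ((fun S => insert b (T S ∪ MB S)) '' D).ncard = D.ncard :=
        Set.ncard_image_of_injOn
          (fun S₁ h₁ S₂ h₂ heq => hinjB _ _ h₁.1 h₁.2.1 h₂.1 h₂.2.1 heq)
      calc 2 * D.ncard
          = ((fun S => insert a (T S ∪ MA S)) '' D).ncard +
            ((fun S => insert b (T S ∪ MB S)) '' D).ncard := by rw [hiA, hiB]; ring
        _ = (((fun S => insert a (T S ∪ MA S)) '' D) ∪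
            ((fun S => insert b (T S ∪ MB S)) '' D)).ncard :=
            (Set.ncard_union_eq hdisj (Set.toFinite _) (Set.toFinite _)).symm
        _ ≤ fixc p' n' := by
            rw [hfix']
            exact Set.ncard_le_ncard hsub (Set.toFinite _)
    refine ⟨D.ncard, hcard1, hcard2, ?_⟩
    intro hd0
    have hDne : D.Nonempty := Set.nonempty_of_ncard_ne_zero hd0
    obtain ⟨S, hFS, haS, ⟨hfixB, m', hm'⟩, hfixA⟩ := hDne
    obtain ⟨h1, h2, h3, h4⟩ := hsel1 (UA S) hm'
    exact extract_C4 pos neg a b hps hns hpi hni hmatch hab hFS haS (hbmem S hFS haS)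
      (hTc S) m' h1 h2 h3 h4
      (fun m hm => (hsel1 (UB S) hm).1) (fun m hm => (hsel1 (UB S) hm).2.1)
      (fun m hm => (hsel1 (UB S) hm).2.2.1) (fun m hm => (hsel1 (UB S) hm).2.2.2)
      hfixA

  constructor
  · intro _
    have h1 : (fixc pos neg : ℚ) ≤
        (fixc (fun u v => pos u v ∧ ¬ ((u = a ∧ v = b) ∨ (u = b ∧ v = a)))
          (fun u v => neg u v ∨ (u = a ∧ v = b) ∨ (u = b ∧ v = a)) : ℚ) + d := by
      exact_mod_cast hd1
    have h2 : (2 * d : ℚ) ≤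
        (fixc (fun u v => pos u v ∧ ¬ ((u = a ∧ v = b) ∨ (u = b ∧ v = a)))
          (fun u v => neg u v ∨ (u = a ∧ v = b) ∨ (u = b ∧ v = a)) : ℚ) := by
      exact_mod_cast hd2
    linarith
  · intro hno
    have : d = 0 := by
      by_contra h
      exact hno (hd3 h)
    omega
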